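/- Compactness bound for infinitesimal rigid motions (Lemma 4.1). Let M > 0, δ > 0, let F ⊆ ℝ² be a bounded measurable set, and let ψ : [0,∞) → [0,∞) be a continuous nondecreasing function with ψ(s) → ∞ as s → ∞. Then there exists a constant C = C(M, δ, ψ, F) > 0 such that for every Borel set E ⊆ F with |E| ≥ δ, every skew-symmetric A ∈ ℝ^{2×2} and every b ∈ ℝ²: if ∫_E ψ(|A·x + b|) dx ≤ M, then |A| + |b| ≤ C. -/

import Mathlib

open MeasureTheory Set
open scoped ENNReal NNReal

noncomputable section

/-- The Euclidean plane. -/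
abbrev E2 := EuclideanSpace ℝ (Fin 2)

/-- Frobenius norm of a `2 × 2` real matrix. -/
def matNorm (A : Matrix (Fin 2) (Fin 2) ℝ) : ℝ :=
  Real.sqrt (∑ i : Fin 2, ∑ j : Fin 2, (A i j) ^ 2)

/-- The infinitesimal rigid motion `a_{A,b} : x ↦ A x + b`. -/
def rigid (A : Matrix (Fin 2) (Fin 2) ℝ) (b : E2) : E2 → E2 :=
  fun x => Matrix.toEuclideanLin A x + b

lemma rigid_apply (A : Matrix (Fin 2) (Fin 2) ℝ) (b x : E2) (i : Fin 2) :
    rigid A b x i = (A i 0 * x 0 + A i 1 * x 1) + b i := by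
  fin_cases i <;> simp [rigid, Matrix.toEuclideanLin_apply, Matrix.mulVec, dotProduct, Fin.sum_univ_two,
    PiLp.add_apply]

lemma Ax_apply (A : Matrix (Fin 2) (Fin 2) ℝ) (x : E2) (i : Fin 2) :
    Matrix.toEuclideanLin A x i = A i 0 * x 0 + A i 1 * x 1 := by
  fin_cases i <;> simp [Matrix.toEuclideanLin_apply, Matrix.mulVec, dotProduct, Fin.sum_univ_two]

lemma norm_E2 (x : E2) : ‖x‖ = Real.sqrt ((x 0)^2 + (x 1)^2) := by
  rw [EuclideanSpace.norm_eq]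
  simp [Fin.sum_univ_two, Real.norm_eq_abs, sq_abs]

lemma vol_cb (c : E2) (r : ℝ) (hr : 0 ≤ r) :
    volume (Metric.closedBall c r) = ENNReal.ofReal (Real.pi * r^2) := by
  rw [EuclideanSpace.volume_closedBall, Fintype.card_fin]
  rw [show ((2:ℕ) : ℝ) / 2 + 1 = 2 by norm_num, Real.Gamma_two,
    Real.sq_sqrt Real.pi_pos.le, div_one, ← ENNReal.ofReal_pow hr, ← ENNReal.ofReal_mul (by positivity)]
  ring_nf

lemma norm_Ax (A : Matrix (Fin 2) (Fin 2) ℝ) (x : E2) (a : ℝ)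
    (h00 : A 0 0 = 0) (h11 : A 1 1 = 0) (h01 : A 0 1 = -a) (h10 : A 1 0 = a) :
    ‖Matrix.toEuclideanLin A x‖ = |a| * ‖x‖ := by
  rw [norm_E2, norm_E2, ← Real.sqrt_sq_eq_abs, ← Real.sqrt_mul (sq_nonneg a)]
  congr 1
  rw [Ax_apply, Ax_apply, h00, h11, h01, h10]
  ring

lemma norm_rigid_eq (A : Matrix (Fin 2) (Fin 2) ℝ) (b x c : E2) (a : ℝ)
    (h00 : A 0 0 = 0) (h11 : A 1 1 = 0) (h01 : A 0 1 = -a) (h10 : A 1 0 = a)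
    (ha : a ≠ 0) (hc0 : c 0 = -(b 1)/a) (hc1 : c 1 = b 0/a) :
    ‖rigid A b x‖ = |a| * ‖x - c‖ := by
  rw [norm_E2, norm_E2, ← Real.sqrt_sq_eq_abs, ← Real.sqrt_mul (sq_nonneg a)]
  congr 1
  rw [rigid_apply, rigid_apply, PiLp.sub_apply, PiLp.sub_apply, h00, h11, h01, h10, hc0, hc1]
  field_simp
  ring

set_option maxHeartbeats 1000000 in
/-- **Compactness bound for infinitesimal rigid motions** (Lemma 4.1). -/
theorem rigid_motion_compactness (M δ : ℝ) (hM : 0 < M) (hδ : 0 < δ)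
    (F : Set E2) (hFbdd : Bornology.IsBounded F) (hFmeas : MeasurableSet F)
    (ψ : ℝ → ℝ) (hψcont : ContinuousOn ψ (Ici 0)) (hψmono : MonotoneOn ψ (Ici 0))
    (hψnonneg : ∀ s : ℝ, 0 ≤ s → 0 ≤ ψ s)
    (hψtop : Filter.Tendsto ψ Filter.atTop Filter.atTop) :
    ∃ C : ℝ, 0 < C ∧
      ∀ E : Set E2, MeasurableSet E → E ⊆ F → ENNReal.ofReal δ ≤ volume E →
      ∀ A : Matrix (Fin 2) (Fin 2) ℝ, Matrix.transpose A = -A → ∀ b : E2,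
        (∫⁻ x in E, ENNReal.ofReal (ψ ‖rigid A b x‖)) ≤ ENNReal.ofReal M →
        matNorm A + ‖b‖ ≤ C := by
  obtain ⟨R₀, hR₀⟩ := hFbdd.subset_closedBall 0
  set R : ℝ := max R₀ 0 with hR_def
  have hR0 : 0 ≤ R := le_max_right _ _
  have hFR : F ⊆ Metric.closedBall 0 R :=
    hR₀.trans (Metric.closedBall_subset_closedBall (le_max_left _ _))
  set K : ℝ := 2 * M / δ + 1 with hK_def
  have hKpos : 0 < K := by positivity
  obtain ⟨s₀', hs₀'⟩ := Filter.eventually_atTop.mp (Filter.tendsto_atTop.mp hψtop K)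
  set s₀ : ℝ := max s₀' 1 with hs₀_def
  have hs₀pos : (0:ℝ) < s₀ := lt_of_lt_of_le one_pos (le_max_right _ _)
  have hψK : ∀ s : ℝ, s₀ ≤ s → K ≤ ψ s := fun s hs =>
    hs₀' s ((le_max_left _ _).trans hs)
  set a₀ : ℝ := s₀ * Real.sqrt (2 * Real.pi / δ) with ha₀_def
  have ha₀pos : 0 < a₀ := by
    apply mul_pos hs₀pos
    apply Real.sqrt_pos.mpr
    positivity
  set b₀ : ℝ := s₀ + a₀ * R with hb₀_def
  have hb₀pos : 0 < b₀ := by positivity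
  refine ⟨Real.sqrt 2 * a₀ + b₀ + 1, by positivity, ?_⟩
  intro E hEmeas hEF hEvol A hA b hint
  set a : ℝ := A 1 0 with ha_def
  have h00 : A 0 0 = 0 := by
    have := congrFun (congrFun hA 0) 0
    simp [Matrix.transpose_apply] at this
    linarith
  have h11 : A 1 1 = 0 := by
    have := congrFun (congrFun hA 1) 1
    simp [Matrix.transpose_apply] at this
    linarith
  have h01 : A 0 1 = -a := by
    have := congrFun (congrFun hA 1) 0
    simpa [Matrix.transpose_apply] using this
  -- continuity and measurability
  have hrigid_cont : Continuous (rigid A b) := by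
    exact ((Matrix.toEuclideanLin A).continuous_of_finiteDimensional).add continuous_const
  have hf_cont : Continuous fun x : E2 => ψ ‖rigid A b x‖ :=
    hψcont.comp_continuous (continuous_norm.comp hrigid_cont) (fun x => norm_nonneg _)
  have hf_meas : Measurable fun x : E2 => ENNReal.ofReal (ψ ‖rigid A b x‖) :=
    ENNReal.measurable_ofReal.comp hf_cont.measurable
  -- Step 1: |a| ≤ a₀
  have habs : |a| ≤ a₀ := by
    by_contra hcon
    push_neg at hcon
    have hapos : 0 < |a| := ha₀pos.trans hcon
    have ha : a ≠ 0 := fun h => by simp [h] at hapos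
    set ρ : ℝ := s₀ / |a| with hρ_def
    have hρpos : 0 < ρ := div_pos hs₀pos hapos
    set c : E2 := (EuclideanSpace.equiv (Fin 2) ℝ).symm ![-(b 1)/a, b 0/a] with hc_def
    have hc0 : c 0 = -(b 1)/a := rfl
    have hc1 : c 1 = b 0/a := rfl
    have hnorm : ∀ x : E2, ‖rigid A b x‖ = |a| * ‖x - c‖ := fun x =>
      norm_rigid_eq A b x c a h00 h11 h01 rfl ha hc0 hc1
    set B := Metric.closedBall c ρ with hB_def
    -- volume of B is at most δ/2
    have hπρ : Real.pi * ρ ^ 2 ≤ δ / 2 := by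
      have h1 : δ * a₀ ^ 2 = s₀ ^ 2 * (2 * Real.pi) := by
        rw [ha₀_def, mul_pow, Real.sq_sqrt (by positivity)]
        field_simp
      have h2 : a₀ ^ 2 ≤ |a| ^ 2 := by nlinarith
      have h2' : δ * a₀ ^ 2 ≤ δ * |a| ^ 2 := by nlinarith
      rw [hρ_def, div_pow, mul_div_assoc']
      rw [div_le_div_iff₀ (by positivity) (by norm_num)]
      nlinarith
    have hvolB : volume B ≤ ENNReal.ofReal (δ / 2) := by
      rw [hB_def, vol_cb c ρ hρpos.le]
      exact ENNReal.ofReal_le_ofReal hπρ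
    set G := E \ B with hG_def
    have hGmeas : MeasurableSet G := hEmeas.diff Metric.isClosed_closedBall.measurableSet
    have hGvol : ENNReal.ofReal (δ / 2) ≤ volume G := by
      have h4 : volume E ≤ volume G + volume B := by
        refine (measure_mono ?_).trans (measure_union_le G B)
        intro x hx
        by_cases hxB : x ∈ B
        · exact Or.inr hxB
        · exact Or.inl ⟨hx, hxB⟩
      have h5 : ENNReal.ofReal δ ≤ volume G + ENNReal.ofReal (δ / 2) :=
        hEvol.trans (h4.trans (add_le_add le_rfl hvolB))
      have h6 : ENNReal.ofReal δ - ENNReal.ofReal (δ / 2) ≤ volume G :=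
        tsub_le_iff_right.mpr h5
      calc ENNReal.ofReal (δ / 2) = ENNReal.ofReal δ - ENNReal.ofReal (δ / 2) := by
            rw [← ENNReal.ofReal_sub _ (by positivity)]; ring_nf
        _ ≤ volume G := h6
    have hlow : ∀ x ∈ G, ENNReal.ofReal K ≤ ENNReal.ofReal (ψ ‖rigid A b x‖) := by
      intro x hx
      apply ENNReal.ofReal_le_ofReal
      apply hψK
      have hxB : x ∉ B := hx.2
      rw [hB_def, Metric.mem_closedBall, not_le, dist_eq_norm] at hxB
      rw [hnorm x]
      calc s₀ = |a| * ρ := by rw [hρ_def, mul_div_cancel₀ _ hapos.ne']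
        _ ≤ |a| * ‖x - c‖ := mul_le_mul_of_nonneg_left hxB.le (abs_nonneg a)
    have hKint : ENNReal.ofReal (K * (δ / 2)) ≤ ENNReal.ofReal M := by
      calc ENNReal.ofReal (K * (δ / 2)) = ENNReal.ofReal K * ENNReal.ofReal (δ / 2) :=
            ENNReal.ofReal_mul hKpos.le
        _ ≤ ENNReal.ofReal K * volume G := by gcongr
        _ = ∫⁻ _ in G, ENNReal.ofReal K := (setLIntegral_const G _).symm
        _ ≤ ∫⁻ x in G, ENNReal.ofReal (ψ ‖rigid A b x‖) := setLIntegral_mono hf_meas hlow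
        _ ≤ ∫⁻ x in E, ENNReal.ofReal (ψ ‖rigid A b x‖) := lintegral_mono_set diff_subset
        _ ≤ ENNReal.ofReal M := hint
    have : K * (δ / 2) ≤ M := (ENNReal.ofReal_le_ofReal_iff hM.le).mp hKint
    have hKδ : K * (δ / 2) = M + δ / 2 := by
      rw [hK_def]; field_simp
    linarith
  -- Step 2: ‖b‖ ≤ b₀
  have hbnorm : ‖b‖ ≤ b₀ := by
    by_contra hcon
    push_neg at hcon
    have hlow : ∀ x ∈ E, ENNReal.ofReal K ≤ ENNReal.ofReal (ψ ‖rigid A b x‖) := by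
      intro x hx
      apply ENNReal.ofReal_le_ofReal
      apply hψK
      have hxR : ‖x‖ ≤ R := by
        have := hFR (hEF hx)
        rwa [Metric.mem_closedBall, dist_zero_right] at this
      have hAx : ‖Matrix.toEuclideanLin A x‖ = |a| * ‖x‖ :=
        norm_Ax A x a h00 h11 h01 rfl
      have h1 : ‖b‖ ≤ ‖rigid A b x‖ + ‖Matrix.toEuclideanLin A x‖ := by
        have : b = rigid A b x - Matrix.toEuclideanLin A x := by
          rw [rigid]; abel
        calc ‖b‖ = ‖rigid A b x - Matrix.toEuclideanLin A x‖ := by rw [← this]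
          _ ≤ _ := norm_sub_le _ _
      have h2 : |a| * ‖x‖ ≤ a₀ * R :=
        mul_le_mul habs hxR (norm_nonneg _) ha₀pos.le
      rw [hAx] at h1
      linarith [hcon, hb₀pos]
    have hKint : ENNReal.ofReal (K * δ) ≤ ENNReal.ofReal M := by
      calc ENNReal.ofReal (K * δ) = ENNReal.ofReal K * ENNReal.ofReal δ :=
            ENNReal.ofReal_mul hKpos.le
        _ ≤ ENNReal.ofReal K * volume E := by gcongr
        _ = ∫⁻ _ in E, ENNReal.ofReal K := (setLIntegral_const E _).symm
        _ ≤ ∫⁻ x in E, ENNReal.ofReal (ψ ‖rigid A b x‖) := setLIntegral_mono hf_meas hlow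
        _ ≤ ENNReal.ofReal M := hint
    have : K * δ ≤ M := (ENNReal.ofReal_le_ofReal_iff hM.le).mp hKint
    have hKδ : K * δ = 2 * M + δ := by
      rw [hK_def]; field_simp
    linarith
  -- conclude
  have hmatN : matNorm A = Real.sqrt 2 * |a| := by
    rw [matNorm]
    rw [Fin.sum_univ_two, Fin.sum_univ_two, Fin.sum_univ_two, h00, h11, h01]
    rw [show (0:ℝ)^2 + (-a)^2 + (a^2 + 0^2) = 2 * a^2 by ring]
    rw [Real.sqrt_mul (by norm_num), Real.sqrt_sq_eq_abs]
  rw [hmatN]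
  have : Real.sqrt 2 * |a| ≤ Real.sqrt 2 * a₀ :=
    mul_le_mul_of_nonneg_left habs (Real.sqrt_nonneg 2)
  linarith
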